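/- For every t₁ > 0 there exists a finite constant K (depending only on a, b, t₁) such that for all β₁, β₂ ∈ [0,1]: ∫₀^{t₁} ∫₀¹ (P_s(β₁, x) - P_s(β₂, x))² dx ds ≤ K·(|β₁ - β₂|² + |β₁ - β₂|^{1/2}). -/

import Mathlib

open Real

/-- `c = -b/(2a)`. -/
noncomputable def cc (a b : ℝ) : ℝ := -b / (2 * a)

/-- The eigenvalues `σ_j = a (c² + (jπ)²)`. -/
noncomputable def sigma' (a b : ℝ) (j : ℕ) : ℝ := a * ((cc a b) ^ 2 + ((j : ℝ) * π) ^ 2)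

/-- The phases `k_j = arctan(-jπ/c)` for `j ≥ 1`. -/
noncomputable def kk (a b : ℝ) (j : ℕ) : ℝ := arctan (-((j : ℝ) * π) / cc a b)

/-- The eigenfunctions: `ψ₀(x) = √(2c/(1-e^{-2c}))`, and
`ψ_j(x) = √2 e^{cx} sin(jπx + k_j)` for `j ≥ 1`. -/
noncomputable def psi (a b : ℝ) : ℕ → ℝ → ℝ
  | 0, _ => Real.sqrt (2 * cc a b / (1 - Real.exp (-2 * cc a b)))
  | (j + 1), x =>
      Real.sqrt 2 * Real.exp (cc a b * x) * Real.sin (((j : ℝ) + 1) * π * x + kk a b (j + 1))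

/-- The Green's function `P_t(y,x) = ∑_{j=0}^∞ e^{-σ_j t} ψ_j(y) ψ_j(x)` of
`L = a∂²ₓ + b∂ₓ` with Neumann boundary conditions on `[0,1]`. -/
noncomputable def greenP (a b : ℝ) (t y x : ℝ) : ℝ :=
  ∑' j : ℕ, Real.exp (-sigma' a b j * t) * psi a b j y * psi a b j x


/-- modified eigenfunctions without the exponential: `φ_0 = 0`, `φ_j = √2 sin(jπx+k_j)`. -/
noncomputable def phi (a b : ℝ) : ℕ → ℝ → ℝ
  | 0, _ => 0
  | (j + 1), x => Real.sqrt 2 * Real.sin (((j : ℝ) + 1) * π * x + kk a b (j + 1))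

noncomputable def Bc (a b : ℝ) : ℝ :=
  max (Real.sqrt (2 * cc a b / (1 - Real.exp (-2 * cc a b)))) (Real.sqrt 2 * Real.exp |cc a b|)

noncomputable def Lc (a b : ℝ) : ℝ := Real.sqrt 2 * Real.exp |cc a b| * (|cc a b| + π)

lemma Bc_pos (a b : ℝ) : 0 < Bc a b :=
  lt_max_of_lt_right (by positivity)

lemma Lc_nonneg (a b : ℝ) : 0 ≤ Lc a b := by
  unfold Lc
  have h1 : (0:ℝ) < |cc a b| + π := by positivity
  positivity

lemma phi_bound (a b : ℝ) (j : ℕ) (x : ℝ) : |phi a b j x| ≤ Real.sqrt 2 := by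
  cases j with
  | zero => simp [phi, Real.sqrt_nonneg]
  | succ j =>
    simp only [phi, abs_mul, abs_of_nonneg (Real.sqrt_nonneg 2)]
    calc √2 * |Real.sin _| ≤ √2 * 1 := by
          gcongr; exact abs_sin_le_one _
      _ = √2 := mul_one _

lemma phi_cont (a b : ℝ) (j : ℕ) : Continuous (phi a b j) := by
  cases j with
  | zero => exact continuous_const
  | succ j => exact continuous_const.mul (Real.continuous_sin.comp (by fun_prop))

lemma psi_succ_eq (a b : ℝ) (j : ℕ) (x : ℝ) :
    psi a b (j + 1) x = Real.exp (cc a b * x) * phi a b (j + 1) x := by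
  simp [psi, phi]; ring

lemma psi_zero_const (a b : ℝ) (x y : ℝ) : psi a b 0 x = psi a b 0 y := rfl

lemma exp_cx_le (c x : ℝ) (hx : x ∈ Set.Icc (0:ℝ) 1) : Real.exp (c * x) ≤ Real.exp |c| := by
  apply Real.exp_le_exp.2
  rcases le_or_gt c 0 with h | h
  · calc c * x ≤ 0 := mul_nonpos_of_nonpos_of_nonneg h hx.1
      _ ≤ |c| := abs_nonneg c
  · calc c * x ≤ c * 1 := by nlinarith [hx.2]
      _ = c := mul_one c
      _ ≤ |c| := le_abs_self c

lemma psi_bound (a b : ℝ) (j : ℕ) (x : ℝ) (hx : x ∈ Set.Icc (0:ℝ) 1) :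
    |psi a b j x| ≤ Bc a b := by
  cases j with
  | zero =>
    simp only [psi, Bc]
    rw [abs_of_nonneg (Real.sqrt_nonneg _)]
    exact le_max_left _ _
  | succ j =>
    rw [psi_succ_eq]
    calc |Real.exp (cc a b * x) * phi a b (j+1) x|
        = Real.exp (cc a b * x) * |phi a b (j+1) x| := by
          rw [abs_mul, abs_of_pos (Real.exp_pos _)]
      _ ≤ Real.exp |cc a b| * √2 := by
          apply mul_le_mul (exp_cx_le _ _ hx) (phi_bound a b _ x) (abs_nonneg _)
            (Real.exp_pos _).le
      _ ≤ Bc a b := by rw [mul_comm]; exact le_max_right _ _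
section Chunk2
variable {a b : ℝ}

lemma psi_lip (a b : ℝ) (j : ℕ) (y y' : ℝ) (hy : y ∈ Set.Icc (0:ℝ) 1)
    (hy' : y' ∈ Set.Icc (0:ℝ) 1) :
    |psi a b j y - psi a b j y'| ≤ Lc a b * ((j : ℝ) + 1) * |y - y'| := by
  cases j with
  | zero =>
    rw [psi_zero_const a b y y', sub_self, abs_zero]
    have := Lc_nonneg a b
    positivity
  | succ j =>
    set c := cc a b with hcdef
    set ω : ℝ := ((j : ℝ) + 1) * π with hω
    set k := kk a b (j + 1) with hk
    have hωpos : 0 < ω := by positivity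
    set f : ℝ → ℝ := fun x => Real.sqrt 2 * Real.exp (c * x) * Real.sin (ω * x + k) with hf
    set f' : ℝ → ℝ := fun x =>
      Real.sqrt 2 * Real.exp (c * x) * (c * Real.sin (ω * x + k) + ω * Real.cos (ω * x + k))
      with hf'
    have hderiv : ∀ x : ℝ, HasDerivAt f (f' x) x := by
      intro x
      have h1 : HasDerivAt (fun x : ℝ => Real.exp (c * x)) (Real.exp (c * x) * c) x := by
        have : HasDerivAt (fun x : ℝ => c * x) c x := by
          simpa using (hasDerivAt_id x).const_mul c
        exact this.exp
      have h2 : HasDerivAt (fun x : ℝ => Real.sin (ω * x + k)) (Real.cos (ω * x + k) * ω) x := by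
        have : HasDerivAt (fun x : ℝ => ω * x + k) ω x := by
          simpa using ((hasDerivAt_id x).const_mul ω).add_const k
        exact this.sin
      have := (h1.const_mul (Real.sqrt 2)).mul h2
      refine this.congr_deriv ?_
      show _ = Real.sqrt 2 * Real.exp (c * x) * (c * Real.sin (ω * x + k) + ω * Real.cos (ω * x + k))
      ring
    have hbound : ∀ x ∈ Set.Icc (0:ℝ) 1, ‖f' x‖ ≤ Lc a b * ((j : ℝ) + 1 + 1) := by
      intro x hx
      rw [Real.norm_eq_abs, hf']
      have h3 : |c * Real.sin (ω * x + k) + ω * Real.cos (ω * x + k)| ≤ |c| + ω := by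
        calc |c * Real.sin (ω * x + k) + ω * Real.cos (ω * x + k)|
            ≤ |c * Real.sin (ω * x + k)| + |ω * Real.cos (ω * x + k)| := abs_add_le _ _
          _ ≤ |c| * 1 + ω * 1 := by
              rw [abs_mul, abs_mul, abs_of_pos hωpos]
              gcongr <;> [exact abs_sin_le_one _; exact abs_cos_le_one _]
          _ = |c| + ω := by ring
      calc |Real.sqrt 2 * Real.exp (c * x) * (c * Real.sin (ω * x + k) + ω * Real.cos (ω * x + k))|
          = Real.sqrt 2 * Real.exp (c * x) * |c * Real.sin (ω * x + k) + ω * Real.cos (ω * x + k)| := by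
            rw [abs_mul, abs_mul, abs_of_nonneg (Real.sqrt_nonneg 2), abs_of_pos (Real.exp_pos _)]
        _ ≤ Real.sqrt 2 * Real.exp |c| * (|c| + ω) := by
            have h4 := exp_cx_le c x hx
            have h5 : (0:ℝ) ≤ |c| + ω := by positivity
            have := Real.sqrt_nonneg 2
            gcongr
        _ ≤ Lc a b * ((j : ℝ) + 1 + 1) := by
            rw [Lc, hω]
            have hπ := pi_pos
            have h2 : (0:ℝ) ≤ Real.sqrt 2 * Real.exp |c| := by positivity
            have : |c| + ((j : ℝ) + 1) * π ≤ (|c| + π) * ((j : ℝ) + 1 + 1) := by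
              have : (0:ℝ) ≤ (j:ℝ) := Nat.cast_nonneg j
              nlinarith [abs_nonneg c]
            calc Real.sqrt 2 * Real.exp |c| * (|c| + ((j : ℝ) + 1) * π)
                ≤ Real.sqrt 2 * Real.exp |c| * ((|c| + π) * ((j : ℝ) + 1 + 1)) := by gcongr
              _ = Real.sqrt 2 * Real.exp |c| * (|c| + π) * ((j : ℝ) + 1 + 1) := by ring
    have key := (convex_Icc (0:ℝ) 1).norm_image_sub_le_of_norm_hasDerivWithin_le
      (fun x _ => (hderiv x).hasDerivWithinAt) hbound hy' hy
    have hfy : psi a b (j+1) y = f y := by simp [psi, hf, hω, hk, hcdef]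
    have hfy' : psi a b (j+1) y' = f y' := by simp [psi, hf, hω, hk, hcdef]
    rw [hfy, hfy']
    simpa [Real.norm_eq_abs, Nat.cast_succ] using key

lemma cc_ne (ha : 0 < a) (hb : b ≠ 0) : cc a b ≠ 0 := by
  unfold cc
  intro h
  have := div_eq_zero_iff.mp h
  rcases this with h | h
  · exact hb (by linarith [neg_eq_zero.mp h])
  · linarith

lemma sigma_pos (ha : 0 < a) (hb : b ≠ 0) (j : ℕ) : 0 < sigma' a b j := by
  unfold sigma'
  have h := cc_ne ha hb
  have : 0 < (cc a b) ^ 2 := by positivity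
  nlinarith [sq_nonneg ((j:ℝ) * π)]

lemma sigma_ge (ha : 0 < a) (j : ℕ) : a * π ^ 2 * (j:ℝ) ^ 2 ≤ sigma' a b j := by
  unfold sigma'
  nlinarith [sq_nonneg (cc a b), sq_nonneg ((j:ℝ)*π), pi_pos]

lemma exp_sigma_le (ha : 0 < a) {s : ℝ} (hs : 0 < s) (j : ℕ) :
    Real.exp (-sigma' a b j * s) ≤ Real.exp (-(a * π ^ 2 * s)) ^ j := by
  rw [← Real.exp_nat_mul]
  apply Real.exp_le_exp.2
  have h1 : a * π ^ 2 * (j:ℝ) ≤ sigma' a b j := by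
    have h2 : (j:ℝ) ≤ (j:ℝ)^2 := by
      rcases Nat.eq_zero_or_pos j with h | h
      · simp [h]
      · have : (1:ℝ) ≤ (j:ℝ) := by exact_mod_cast h
        nlinarith
    calc a * π ^ 2 * (j:ℝ) ≤ a * π ^ 2 * (j:ℝ)^2 := by
          have : (0:ℝ) < a * π ^ 2 := by positivity
          nlinarith
      _ ≤ sigma' a b j := sigma_ge ha j
  calc (j:ℝ) * -(a * π ^ 2 * s) = -(a * π ^ 2 * (j:ℝ)) * s := by ring
    _ ≥ -sigma' a b j * s := by nlinarith
  
lemma summable_exp_sigma (ha : 0 < a) {s : ℝ} (hs : 0 < s) :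
    Summable (fun j : ℕ => Real.exp (-sigma' a b j * s)) := by
  apply Summable.of_nonneg_of_le (fun j => (Real.exp_pos _).le)
    (fun j => exp_sigma_le ha hs j)
  apply summable_geometric_of_lt_one (Real.exp_pos _).le
  rw [Real.exp_lt_one_iff]
  have : 0 < a * π ^ 2 * s := by positivity
  linarith

lemma summable_exp_sigma_mul (ha : 0 < a) {s : ℝ} (hs : 0 < s) {u : ℕ → ℝ} {U : ℝ}
    (hu : ∀ j, |u j| ≤ U) :
    Summable (fun j : ℕ => Real.exp (-sigma' a b j * s) * u j) := by
  apply Summable.of_norm_bounded (g := fun j => Real.exp (-sigma' a b j * s) * U)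
    ((summable_exp_sigma ha hs).mul_right U)
  intro j
  rw [Real.norm_eq_abs, abs_mul, abs_of_pos (Real.exp_pos _)]
  exact mul_le_mul_of_nonneg_left (hu j) (Real.exp_pos _).le

end Chunk2
section Chunk3

lemma integral_sin_kk_sq (a b : ℝ) {u : ℕ} (hu : u ≠ 0) :
    ∫ x in (0:ℝ)..1, Real.sin ((u:ℝ)*π*x + kk a b u) ^ 2 = 1/2 := by
  set ω : ℝ := (u:ℝ) * π with hω
  have hωpos : 0 < ω := by
    have : 0 < (u:ℝ) := by exact_mod_cast Nat.pos_of_ne_zero hu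
    positivity
  set k := kk a b u with hk
  set F : ℝ → ℝ := fun x => x/2 - Real.sin (2*(ω*x + k))/(4*ω) with hF
  have hderiv : ∀ x ∈ Set.uIcc (0:ℝ) 1, HasDerivAt F (Real.sin (ω*x + k) ^ 2) x := by
    intro x _
    have h1 : HasDerivAt (fun x : ℝ => 2*(ω*x + k)) (2*ω) x := by
      simpa using (((hasDerivAt_id x).const_mul ω).add_const k).const_mul 2
    have h2 := h1.sin
    have h3 : HasDerivAt F (1/2 - Real.cos (2*(ω*x+k)) * (2*ω)/(4*ω)) x := by
      exact ((hasDerivAt_id x).div_const 2).sub (h2.div_const (4*ω))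
    convert h3 using 1
    have := Real.sin_sq_eq_half_sub (ω*x + k)
    field_simp at this ⊢
    nlinarith [this]
  have hint : IntervalIntegrable (fun x => Real.sin (ω*x + k) ^ 2) MeasureTheory.volume 0 1 := by
    apply Continuous.intervalIntegrable; fun_prop
  have := intervalIntegral.integral_eq_sub_of_hasDerivAt hderiv hint
  have h4 : 2*(ω*1 + k) = 2*k + ((2*u : ℤ) : ℝ) * π := by push_cast [hω]; ring
  have h5 : Real.sin (2*(ω*1 + k)) = Real.sin (2*k) := by
    rw [h4, Real.sin_add_int_mul_pi]
    have : ((-1 : ℝ)) ^ (2*(u:ℤ)) = 1 := by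
      rw [zpow_mul]; norm_num
    rw [this, one_mul]
  have h6 : 2*(ω*0 + k) = 2*k := by ring
  rw [this]
  show (1:ℝ)/2 - Real.sin (2*(ω*1 + k))/(4*ω) - ((0:ℝ)/2 - Real.sin (2*(ω*0+k))/(4*ω)) = 1/2
  rw [h5, h6]
  ring

lemma integral_sin_kk_mul_of_ne (a b : ℝ) (ha : 0 < a) (hb : b ≠ 0) {u v : ℕ}
    (hu : u ≠ 0) (hv : v ≠ 0) (huv : u ≠ v) :
    ∫ x in (0:ℝ)..1, Real.sin ((u:ℝ)*π*x + kk a b u) * Real.sin ((v:ℝ)*π*x + kk a b v) = 0 := by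
  have hc := cc_ne ha hb
  have hπ := pi_pos
  set c := cc a b with hcdef
  set κ₁ := kk a b u with hκ₁
  set κ₂ := kk a b v with hκ₂
  set p : ℝ := ((u:ℝ) - (v:ℝ)) * π with hp
  set q : ℝ := ((u:ℝ) + (v:ℝ)) * π with hq
  have huv' : (u:ℝ) ≠ (v:ℝ) := by exact_mod_cast huv
  have hpne : p ≠ 0 := by
    rw [hp]; exact mul_ne_zero (sub_ne_zero.2 huv') (ne_of_gt hπ)
  have hqpos : 0 < q := by
    have h1 : 0 < (u:ℝ) := by exact_mod_cast Nat.pos_of_ne_zero hu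
    have h2 : 0 < (v:ℝ) := by exact_mod_cast Nat.pos_of_ne_zero hv
    rw [hq]; positivity
  set F : ℝ → ℝ := fun x => Real.sin (p*x + (κ₁ - κ₂))/(2*p) - Real.sin (q*x + (κ₁ + κ₂))/(2*q)
    with hF
  have hderiv : ∀ x ∈ Set.uIcc (0:ℝ) 1,
      HasDerivAt F (Real.sin ((u:ℝ)*π*x + κ₁) * Real.sin ((v:ℝ)*π*x + κ₂)) x := by
    intro x _
    have h1 : HasDerivAt (fun x : ℝ => p*x + (κ₁ - κ₂)) p x := by
      simpa using ((hasDerivAt_id x).const_mul p).add_const (κ₁ - κ₂)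
    have h2 : HasDerivAt (fun x : ℝ => q*x + (κ₁ + κ₂)) q x := by
      simpa using ((hasDerivAt_id x).const_mul q).add_const (κ₁ + κ₂)
    have h3 : HasDerivAt F (Real.cos (p*x + (κ₁ - κ₂)) * p/(2*p) -
        Real.cos (q*x + (κ₁ + κ₂)) * q/(2*q)) x :=
      (h1.sin.div_const (2*p)).sub (h2.sin.div_const (2*q))
    convert h3 using 1
    have e1 : Real.cos (p*x + (κ₁ - κ₂)) * p/(2*p) = Real.cos (p*x + (κ₁ - κ₂))/2 := by
      field_simp
    have e2 : Real.cos (q*x + (κ₁ + κ₂)) * q/(2*q) = Real.cos (q*x + (κ₁ + κ₂))/2 := by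
      field_simp
    rw [e1, e2]
    have key := Real.cos_sub_cos (p*x + (κ₁ - κ₂)) (q*x + (κ₁ + κ₂))
    have e3 : (p*x + (κ₁ - κ₂) + (q*x + (κ₁ + κ₂)))/2 = (u:ℝ)*π*x + κ₁ := by
      rw [hp, hq]; ring
    have e4 : (p*x + (κ₁ - κ₂) - (q*x + (κ₁ + κ₂)))/2 = -((v:ℝ)*π*x + κ₂) := by
      rw [hp, hq]; ring
    rw [e3, e4, Real.sin_neg] at key
    linarith [key]
  have hint : IntervalIntegrable
      (fun x => Real.sin ((u:ℝ)*π*x + κ₁) * Real.sin ((v:ℝ)*π*x + κ₂))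
      MeasureTheory.volume 0 1 := by
    apply Continuous.intervalIntegrable; fun_prop
  rw [intervalIntegral.integral_eq_sub_of_hasDerivAt hderiv hint]
  -- now the endpoint computation
  have hsin1 : Real.sin (p*1 + (κ₁ - κ₂)) = ((-1:ℝ)) ^ ((u:ℤ) - (v:ℤ)) * Real.sin (κ₁ - κ₂) := by
    have : p*1 + (κ₁ - κ₂) = (κ₁ - κ₂) + (((u:ℤ) - (v:ℤ) : ℤ) : ℝ) * π := by
      push_cast [hp]; ring
    rw [this, Real.sin_add_int_mul_pi]
  have hsin2 : Real.sin (q*1 + (κ₁ + κ₂)) = ((-1:ℝ)) ^ ((u:ℤ) + (v:ℤ)) * Real.sin (κ₁ + κ₂) := by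
    have : q*1 + (κ₁ + κ₂) = (κ₁ + κ₂) + (((u:ℤ) + (v:ℤ) : ℤ) : ℝ) * π := by
      push_cast [hq]; ring
    rw [this, Real.sin_add_int_mul_pi]
  -- parities agree
  have hpar : ((-1:ℝ)) ^ ((u:ℤ) - (v:ℤ)) = ((-1:ℝ)) ^ ((u:ℤ) + (v:ℤ)) := by
    have : ((u:ℤ) + (v:ℤ)) = ((u:ℤ) - (v:ℤ)) + 2*(v:ℤ) := by ring
    rw [this, zpow_add₀ (by norm_num : (-1:ℝ) ≠ 0), zpow_mul]
    norm_num
  -- explicit values of sin of sums/differences of the phases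
  set tu : ℝ := -(u:ℝ)*π / c with htu
  set tv : ℝ := -(v:ℝ)*π / c with htv
  set Qu : ℝ := Real.sqrt (1 + tu^2) with hQu
  set Qv : ℝ := Real.sqrt (1 + tv^2) with hQv
  have hQu0 : 0 < Qu := Real.sqrt_pos.2 (by positivity)
  have hQv0 : 0 < Qv := Real.sqrt_pos.2 (by positivity)
  have hsinu : Real.sin κ₁ = tu / Qu := by
    rw [hκ₁, kk]
    have : -((u:ℝ) * π) / c = tu := by rw [htu]; ring_nf
    rw [this, Real.sin_arctan]
  have hcosu : Real.cos κ₁ = 1 / Qu := by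
    rw [hκ₁, kk]
    have : -((u:ℝ) * π) / c = tu := by rw [htu]; ring_nf
    rw [this, Real.cos_arctan]
  have hsinv : Real.sin κ₂ = tv / Qv := by
    rw [hκ₂, kk]
    have : -((v:ℝ) * π) / c = tv := by rw [htv]; ring_nf
    rw [this, Real.sin_arctan]
  have hcosv : Real.cos κ₂ = 1 / Qv := by
    rw [hκ₂, kk]
    have : -((v:ℝ) * π) / c = tv := by rw [htv]; ring_nf
    rw [this, Real.cos_arctan]
  have hsd : Real.sin (κ₁ - κ₂) = (tu - tv) / (Qu * Qv) := by
    rw [Real.sin_sub, hsinu, hcosu, hsinv, hcosv]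
    field_simp
  have hss : Real.sin (κ₁ + κ₂) = (tu + tv) / (Qu * Qv) := by
    rw [Real.sin_add, hsinu, hcosu, hsinv, hcosv]
    field_simp
  -- the key cancellation
  have hkey : Real.sin (κ₁ - κ₂) / (2*p) = Real.sin (κ₁ + κ₂) / (2*q) := by
    rw [hsd, hss, hp, hq, htu, htv]
    have hu' : (0:ℝ) < (u:ℝ) := by exact_mod_cast Nat.pos_of_ne_zero hu
    have hv' : (0:ℝ) < (v:ℝ) := by exact_mod_cast Nat.pos_of_ne_zero hv
    have h1 : ((u:ℝ) - (v:ℝ)) ≠ 0 := sub_ne_zero.2 huv'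
    have h2 : ((u:ℝ) + (v:ℝ)) ≠ 0 := by positivity
    field_simp
    ring
  rw [hF]
  simp only [mul_one] at *
  rw [hsin1, hsin2, hpar]
  have : Real.sin (p*0 + (κ₁ - κ₂)) = Real.sin (κ₁ - κ₂) := by norm_num
  rw [this]
  have : Real.sin (q*0 + (κ₁ + κ₂)) = Real.sin (κ₁ + κ₂) := by norm_num
  rw [this]
  have expand : ∀ X Y : ℝ, X/(2*p) - Y/(2*q) - (Real.sin (κ₁-κ₂)/(2*p) - Real.sin (κ₁+κ₂)/(2*q))
      = (X - Real.sin (κ₁-κ₂))/(2*p) - (Y - Real.sin (κ₁+κ₂))/(2*q) := by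
    intro X Y; field_simp; ring
  set e : ℝ := ((-1:ℝ)) ^ ((u:ℤ) + (v:ℤ)) with he
  have : e * Real.sin (κ₁-κ₂)/(2*p) - e * Real.sin (κ₁+κ₂)/(2*q)
      - (Real.sin (κ₁-κ₂)/(2*p) - Real.sin (κ₁+κ₂)/(2*q)) = 0 := by
    have h1 : Real.sin (κ₁ - κ₂) / (2*p) = Real.sin (κ₁ + κ₂) / (2*q) := hkey
    have h2 : e * Real.sin (κ₁-κ₂)/(2*p) = e * (Real.sin (κ₁-κ₂)/(2*p)) := by ring
    have h3 : e * Real.sin (κ₁+κ₂)/(2*q) = e * (Real.sin (κ₁+κ₂)/(2*q)) := by ring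
    rw [h2, h3, h1]; ring
  linarith [this]

end Chunk3
section Chunk4


open MeasureTheory

lemma integral_phi_mul_phi (a b : ℝ) (ha : 0 < a) (hb : b ≠ 0) (j k : ℕ) :
    ∫ x in (0:ℝ)..1, phi a b j x * phi a b k x = if j = k ∧ j ≠ 0 then 1 else 0 := by
  match j, k with
  | 0, k => simp [phi]
  | (j+1), 0 => simp [phi]
  | (j+1), (k+1) =>
    have hcast : ∀ m : ℕ, ((m:ℝ) + 1) = (((m+1 : ℕ)):ℝ) := by intro m; push_cast; ring
    rcases eq_or_ne j k with rfl | hne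
    · have h2 : ∀ x : ℝ, phi a b (j+1) x * phi a b (j+1) x
          = 2 * Real.sin (((j+1 : ℕ):ℝ)*π*x + kk a b (j+1)) ^ 2 := by
        intro x
        simp only [phi, hcast j]
        rw [show ∀ r s : ℝ, (√2 * r) * (√2 * s) = (√2*√2) * (r*s) by intros; ring,
          Real.mul_self_sqrt (by norm_num : (0:ℝ) ≤ 2)]
        ring
      simp only [h2]
      rw [intervalIntegral.integral_const_mul, integral_sin_kk_sq a b (Nat.succ_ne_zero j)]
      norm_num
    · have hne' : j + 1 ≠ k + 1 := by omega
      have h2 : ∀ x : ℝ, phi a b (j+1) x * phi a b (k+1) x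
          = 2 * (Real.sin (((j+1 : ℕ):ℝ)*π*x + kk a b (j+1))
              * Real.sin (((k+1 : ℕ):ℝ)*π*x + kk a b (k+1))) := by
        intro x
        simp only [phi, hcast j, hcast k]
        rw [show ∀ r s : ℝ, (√2 * r) * (√2 * s) = (√2*√2) * (r*s) by intros; ring,
          Real.mul_self_sqrt (by norm_num : (0:ℝ) ≤ 2)]
      simp only [h2]
      rw [intervalIntegral.integral_const_mul,
        integral_sin_kk_mul_of_ne a b ha hb (Nat.succ_ne_zero j) (Nat.succ_ne_zero k) hne']
      simp [hne', hne]

set_option maxHeartbeats 2000000 in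
lemma parseval (a b : ℝ) (ha : 0 < a) (hb : b ≠ 0) (α : ℕ → ℝ) (hα0 : α 0 = 0)
    (hα : Summable (fun j => |α j|)) :
    ∫ x in (0:ℝ)..1, (∑' j, α j * phi a b j x)^2 = ∑' j, (α j)^2 := by
  set μ := MeasureTheory.volume.restrict (Set.Ioc (0:ℝ) 1) with hμdef
  have hμ1 : (μ Set.univ).toReal = 1 := by
    rw [hμdef, Measure.restrict_apply_univ, Real.volume_Ioc]
    norm_num
  set h : ℝ → ℝ := fun x => ∑' j, α j * phi a b j x with hh
  have hsummable : ∀ x : ℝ, Summable (fun j => α j * phi a b j x) := by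
    intro x
    apply Summable.of_norm_bounded (g := fun j => |α j| * Real.sqrt 2) (hα.mul_right _)
    intro j
    rw [Real.norm_eq_abs, abs_mul]
    exact mul_le_mul_of_nonneg_left (phi_bound a b j x) (abs_nonneg _)
  set H : ℝ := ∑' j, |α j| * Real.sqrt 2 with hH
  have hHnn : 0 ≤ H := tsum_nonneg (fun j => by positivity)
  have hhb : ∀ x : ℝ, |h x| ≤ H := by
    intro x
    have := tsum_of_norm_bounded (f := fun j => α j * phi a b j x)
      (g := fun j => |α j| * Real.sqrt 2) (hα.mul_right (Real.sqrt 2)).hasSum ?_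
    · exact this
    · intro j
      rw [Real.norm_eq_abs, abs_mul]
      exact mul_le_mul_of_nonneg_left (phi_bound a b j x) (abs_nonneg _)
  have hhcont : Continuous h := by
    apply continuous_tsum (fun j => continuous_const.mul (phi_cont a b j)) (hα.mul_right (Real.sqrt 2))
    intro j x
    rw [Real.norm_eq_abs, Pi.mul_apply, abs_mul _ (phi a b j x)]
    exact mul_le_mul_of_nonneg_left (phi_bound a b j x) (abs_nonneg _)
  -- inner integrals
  have hinner : ∀ j : ℕ, ∫ x, phi a b j x * h x ∂μ = α j := by
    intro j
    have hpt : ∀ x : ℝ, phi a b j x * h x = ∑' k, α k * (phi a b j x * phi a b k x) := by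
      intro x
      rw [hh, ← tsum_mul_left]
      congr 1; funext k; ring
    simp only [hpt]
    rw [← MeasureTheory.integral_tsum_of_summable_integral_norm]
    · have hterm : ∀ k : ℕ, ∫ x, α k * (phi a b j x * phi a b k x) ∂μ
          = α k * (if j = k ∧ j ≠ 0 then 1 else 0) := by
        intro k
        rw [MeasureTheory.integral_const_mul]
        congr 1
        rw [← intervalIntegral.integral_of_le (zero_le_one)]
        exact integral_phi_mul_phi a b ha hb j k
      simp only [hterm]
      rcases eq_or_ne j 0 with rfl | hj0
      · simp [hα0]
      · rw [tsum_eq_single j]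
        · simp [hj0]
        · intro k hk
          have : ¬ (j = k ∧ j ≠ 0) := by tauto
          simp [this]
    · intro k
      apply Continuous.integrableOn_Ioc
      exact continuous_const.mul ((phi_cont a b j).mul (phi_cont a b k))
    · apply Summable.of_nonneg_of_le (fun k => MeasureTheory.integral_nonneg (fun x => norm_nonneg _))
        (fun k => ?_) (hα.mul_right (Real.sqrt 2 * Real.sqrt 2))
      calc ∫ x, ‖α k * (phi a b j x * phi a b k x)‖ ∂μ
          ≤ ∫ _, |α k| * (Real.sqrt 2 * Real.sqrt 2) ∂μ := by
            apply MeasureTheory.integral_mono _ (MeasureTheory.integrable_const _)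
            · intro x
              show ‖α k * (phi a b j x * phi a b k x)‖ ≤ |α k| * (Real.sqrt 2 * Real.sqrt 2)
              rw [Real.norm_eq_abs, abs_mul, abs_mul]
              have h1 := phi_bound a b j x
              have h2 := phi_bound a b k x
              have h3 := abs_nonneg (phi a b j x)
              have h4 := abs_nonneg (phi a b k x)
              have := Real.sqrt_nonneg 2
              apply mul_le_mul_of_nonneg_left _ (abs_nonneg (α k))
              exact mul_le_mul h1 h2 h4 (by positivity)
            · apply Integrable.norm
              apply Continuous.integrableOn_Ioc
              exact continuous_const.mul ((phi_cont a b j).mul (phi_cont a b k))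
      _ = |α k| * (Real.sqrt 2 * Real.sqrt 2) := by
            rw [MeasureTheory.integral_const, measureReal_def, hμ1, smul_eq_mul, one_mul]
  -- main expansion
  have hpt2 : ∀ x : ℝ, h x ^ 2 = ∑' j, (α j * phi a b j x) * h x := by
    intro x
    rw [tsum_mul_right]
    have he : (∑' j, α j * phi a b j x) = h x := rfl
    rw [he, sq]
  rw [intervalIntegral.integral_of_le (zero_le_one)]
  show ∫ x in Set.Ioc (0:ℝ) 1, h x ^ 2 = _
  simp only [hpt2]
  rw [← hμdef, ← MeasureTheory.integral_tsum_of_summable_integral_norm]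
  · apply tsum_congr
    intro j
    have : ∀ x : ℝ, (α j * phi a b j x) * h x = α j * (phi a b j x * h x) := by
      intro x; ring
    simp only [this]
    rw [MeasureTheory.integral_const_mul, hinner j]
    ring
  · intro j
    apply Continuous.integrableOn_Ioc
    exact (continuous_const.mul (phi_cont a b j)).mul hhcont
  · apply Summable.of_nonneg_of_le (fun k => MeasureTheory.integral_nonneg (fun x => norm_nonneg _))
      (fun j => ?_) (hα.mul_right (Real.sqrt 2 * H))
    calc ∫ x, ‖(α j * phi a b j x) * h x‖ ∂μ
        ≤ ∫ _, |α j| * (Real.sqrt 2 * H) ∂μ := by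
          apply MeasureTheory.integral_mono _ (MeasureTheory.integrable_const _)
          · intro x
            show ‖(α j * phi a b j x) * h x‖ ≤ |α j| * (Real.sqrt 2 * H)
            rw [Real.norm_eq_abs, abs_mul, abs_mul, mul_assoc]
            apply mul_le_mul_of_nonneg_left _ (abs_nonneg (α j))
            exact mul_le_mul (phi_bound a b j x) (hhb x) (abs_nonneg _) (Real.sqrt_nonneg 2)
          · apply Integrable.norm
            apply Continuous.integrableOn_Ioc
            exact (continuous_const.mul (phi_cont a b j)).mul hhcont
    _ = |α j| * (Real.sqrt 2 * H) := by
          rw [MeasureTheory.integral_const, measureReal_def, hμ1, smul_eq_mul, one_mul]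

end Chunk4
section Chunk5
open MeasureTheory

lemma summable_w : Summable (fun j : ℕ => Real.sqrt ((j:ℝ)+1) / ((j:ℝ)+1)^2) := by
  have h1 : Summable (fun j : ℕ => ((j:ℝ)+1) ^ (-(3/2) : ℝ)) := by
    have h2 : Summable (fun j : ℕ => ((j:ℝ)) ^ (-(3/2) : ℝ)) :=
      (Real.summable_nat_rpow).2 (by norm_num)
    have := (summable_nat_add_iff 1).2 h2
    apply this.congr
    intro j
    push_cast
    ring_nf
  apply h1.congr
  intro j
  have hx : (0:ℝ) < (j:ℝ)+1 := by positivity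
  rw [Real.rpow_neg hx.le]
  rw [show (3/2 : ℝ) = 1 + 1/2 by norm_num, Real.rpow_add hx, Real.rpow_one,
    ← Real.sqrt_eq_rpow]
  rw [eq_div_iff (by positivity), inv_mul_eq_div, div_eq_iff (by positivity)]
  have : Real.sqrt ((j:ℝ)+1) * Real.sqrt ((j:ℝ)+1) = (j:ℝ)+1 :=
    Real.mul_self_sqrt hx.le
  nlinarith [this]

lemma d_abs_le (a b : ℝ) (j : ℕ) {β₁ β₂ : ℝ} (h1 : β₁ ∈ Set.Icc (0:ℝ) 1)
    (h2 : β₂ ∈ Set.Icc (0:ℝ) 1) :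
    |psi a b j β₁ - psi a b j β₂| ≤ 2 * Bc a b := by
  calc |psi a b j β₁ - psi a b j β₂| ≤ |psi a b j β₁| + |psi a b j β₂| := abs_sub _ _
    _ ≤ 2 * Bc a b := by
        have := psi_bound a b j β₁ h1
        have := psi_bound a b j β₂ h2
        linarith

lemma summable_alpha_abs (a b : ℝ) (ha : 0 < a) {s : ℝ} (hs : 0 < s) {β₁ β₂ : ℝ}
    (h1 : β₁ ∈ Set.Icc (0:ℝ) 1) (h2 : β₂ ∈ Set.Icc (0:ℝ) 1) :
    Summable (fun j => |Real.exp (-sigma' a b j * s) * (psi a b j β₁ - psi a b j β₂)|) := by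
  have := summable_exp_sigma_mul (b := b) ha hs
    (u := fun j => |psi a b j β₁ - psi a b j β₂|) (U := 2 * Bc a b)
    (fun j => by rw [abs_abs]; exact d_abs_le a b j h1 h2)
  apply this.congr
  intro j
  rw [abs_mul, abs_of_pos (Real.exp_pos _)]

lemma greenP_diff_eq (a b : ℝ) (ha : 0 < a) (hb : b ≠ 0) {s : ℝ} (hs : 0 < s) {β₁ β₂ x : ℝ}
    (h1 : β₁ ∈ Set.Icc (0:ℝ) 1) (h2 : β₂ ∈ Set.Icc (0:ℝ) 1) (hx : x ∈ Set.Icc (0:ℝ) 1) :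
    greenP a b s β₁ x - greenP a b s β₂ x
      = Real.exp (cc a b * x) *
        ∑' j, (Real.exp (-sigma' a b j * s) * (psi a b j β₁ - psi a b j β₂)) * phi a b j x := by
  have hsum1 : Summable (fun j => Real.exp (-sigma' a b j * s) * (psi a b j β₁ * psi a b j x)) := by
    apply summable_exp_sigma_mul (b := b) ha hs (U := Bc a b * Bc a b)
    intro j
    rw [abs_mul]
    exact mul_le_mul (psi_bound a b j β₁ h1) (psi_bound a b j x hx) (abs_nonneg _)
      (Bc_pos a b).le
  have hsum2 : Summable (fun j => Real.exp (-sigma' a b j * s) * (psi a b j β₂ * psi a b j x)) := by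
    apply summable_exp_sigma_mul (b := b) ha hs (U := Bc a b * Bc a b)
    intro j
    rw [abs_mul]
    exact mul_le_mul (psi_bound a b j β₂ h2) (psi_bound a b j x hx) (abs_nonneg _)
      (Bc_pos a b).le
  have e1 : greenP a b s β₁ x = ∑' j, Real.exp (-sigma' a b j * s) * (psi a b j β₁ * psi a b j x) := by
    rw [greenP]; congr 1; funext j; ring
  have e2 : greenP a b s β₂ x = ∑' j, Real.exp (-sigma' a b j * s) * (psi a b j β₂ * psi a b j x) := by
    rw [greenP]; congr 1; funext j; ring
  rw [e1, e2, ← Summable.tsum_sub hsum1 hsum2, ← tsum_mul_left]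
  apply tsum_congr
  intro j
  cases j with
  | zero =>
    rw [psi_zero_const a b β₁ β₂]
    ring
  | succ j =>
    rw [psi_succ_eq a b j β₁, psi_succ_eq a b j β₂, psi_succ_eq a b j x]
    ring

lemma inner_bound (a b : ℝ) (ha : 0 < a) (hb : b ≠ 0) {s : ℝ} (hs : 0 < s) {β₁ β₂ : ℝ}
    (h1 : β₁ ∈ Set.Icc (0:ℝ) 1) (h2 : β₂ ∈ Set.Icc (0:ℝ) 1) :
    ∫ x in (0:ℝ)..1, (greenP a b s β₁ x - greenP a b s β₂ x)^2
      ≤ Real.exp (2*|cc a b|) *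
        ∑' j, (Real.exp (-sigma' a b j * s) * (psi a b j β₁ - psi a b j β₂))^2 := by
  set c := cc a b with hcdef
  set α : ℕ → ℝ := fun j => Real.exp (-sigma' a b j * s) * (psi a b j β₁ - psi a b j β₂)
    with hα
  have hα0 : α 0 = 0 := by
    rw [hα]
    simp only [psi_zero_const a b β₁ β₂, sub_self, mul_zero]
  have hαsum : Summable (fun j => |α j|) := summable_alpha_abs a b ha hs h1 h2
  set h : ℝ → ℝ := fun x => ∑' j, α j * phi a b j x with hh
  have hhcont : Continuous h := by
    apply continuous_tsum (fun j => continuous_const.mul (phi_cont a b j))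
      (hαsum.mul_right (Real.sqrt 2))
    intro j x
    rw [Real.norm_eq_abs, Pi.mul_apply, abs_mul _ (phi a b j x)]
    exact mul_le_mul_of_nonneg_left (phi_bound a b j x) (abs_nonneg _)
  have hEq : Set.EqOn (fun x => (greenP a b s β₁ x - greenP a b s β₂ x)^2)
      (fun x => (Real.exp (c*x) * h x)^2) (Set.uIcc (0:ℝ) 1) := by
    intro x hx
    rw [Set.uIcc_of_le zero_le_one] at hx
    simp only
    rw [greenP_diff_eq a b ha hb hs h1 h2 hx]
  rw [intervalIntegral.integral_congr hEq]
  have hmono : ∫ x in (0:ℝ)..1, (Real.exp (c*x) * h x)^2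
      ≤ ∫ x in (0:ℝ)..1, Real.exp (2*|c|) * (h x)^2 := by
    apply intervalIntegral.integral_mono_on zero_le_one
    · apply Continuous.intervalIntegrable
      exact ((Real.continuous_exp.comp (continuous_const.mul continuous_id)).mul hhcont).pow 2
    · apply Continuous.intervalIntegrable
      exact continuous_const.mul (hhcont.pow 2)
    · intro x hx
      have hb1 : Real.exp (c*x) ≤ Real.exp |c| := exp_cx_le c x hx
      have hb2 : Real.exp (c*x) * Real.exp (c*x) ≤ Real.exp |c| * Real.exp |c| := by
        have := (Real.exp_pos (c*x)).le
        exact mul_le_mul hb1 hb1 this (Real.exp_pos _).le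
      have he : Real.exp |c| * Real.exp |c| = Real.exp (2*|c|) := by
        rw [← Real.exp_add]; ring_nf
      calc (Real.exp (c*x) * h x)^2 = (Real.exp (c*x) * Real.exp (c*x)) * (h x)^2 := by ring
        _ ≤ Real.exp (2*|c|) * (h x)^2 := by
            apply mul_le_mul_of_nonneg_right _ (sq_nonneg _)
            rw [← he]; exact hb2
  calc ∫ x in (0:ℝ)..1, (Real.exp (c*x) * h x)^2
      ≤ ∫ x in (0:ℝ)..1, Real.exp (2*|c|) * (h x)^2 := hmono
    _ = Real.exp (2*|c|) * ∫ x in (0:ℝ)..1, (h x)^2 := intervalIntegral.integral_const_mul _ _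
    _ = Real.exp (2*|c|) * ∑' j, (α j)^2 := by
        rw [parseval a b ha hb α hα0 hαsum]

end Chunk5
section Chunk6
open MeasureTheory

lemma psi_cont (a b : ℝ) (j : ℕ) : Continuous (psi a b j) := by
  cases j with
  | zero => exact continuous_const
  | succ j =>
    apply Continuous.mul
    · exact continuous_const.mul (Real.continuous_exp.comp (continuous_const.mul continuous_id))
    · exact Real.continuous_sin.comp (by fun_prop)

lemma psi_bound_global (a b : ℝ) (j : ℕ) (x : ℝ) :
    |psi a b j x| ≤ Real.sqrt (2 * cc a b / (1 - Real.exp (-2 * cc a b)))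
      + Real.sqrt 2 * Real.exp (cc a b * x) := by
  cases j with
  | zero =>
    simp only [psi]
    rw [abs_of_nonneg (Real.sqrt_nonneg _)]
    have : (0:ℝ) ≤ Real.sqrt 2 * Real.exp (cc a b * x) := by positivity
    linarith
  | succ j =>
    simp only [psi, abs_mul]
    have h1 : |Real.sin (((j:ℝ)+1)*π*x + kk a b (j+1))| ≤ 1 := abs_sin_le_one _
    have h2 : (0:ℝ) ≤ Real.sqrt (2 * cc a b / (1 - Real.exp (-2 * cc a b))) :=
      Real.sqrt_nonneg _
    have h3 : |Real.sqrt 2| = Real.sqrt 2 := abs_of_nonneg (Real.sqrt_nonneg 2)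
    have h4 : |Real.exp (cc a b * x)| = Real.exp (cc a b * x) :=
      abs_of_pos (Real.exp_pos _)
    rw [h3, h4]
    nlinarith [Real.sqrt_nonneg 2, (Real.exp_pos (cc a b * x)).le,
      mul_pos (Real.sqrt_pos.2 (by norm_num : (0:ℝ) < 2)) (Real.exp_pos (cc a b * x)),
      abs_nonneg (Real.sin (((j:ℝ)+1)*π*x + kk a b (j+1)))]

lemma integral_exp_neg_le (σ t₁ : ℝ) (hσ : 0 < σ) (ht₁ : 0 < t₁) :
    ∫ s in (0:ℝ)..t₁, Real.exp (-(2*σ) * s) ≤ 1/(2*σ) := by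
  have hderiv : ∀ s ∈ Set.uIcc (0:ℝ) t₁,
      HasDerivAt (fun s => -Real.exp (-(2*σ) * s)/(2*σ)) (Real.exp (-(2*σ) * s)) s := by
    intro s _
    have h1 : HasDerivAt (fun s : ℝ => -(2*σ) * s) (-(2*σ)) s := by
      simpa using (hasDerivAt_id s).const_mul (-(2*σ))
    have h2 := ((h1.exp).neg).div_const (2*σ)
    refine h2.congr_deriv ?_
    rw [div_eq_iff (by positivity)]; ring
  have hint : IntervalIntegrable (fun s => Real.exp (-(2*σ) * s)) MeasureTheory.volume 0 t₁ := by
    apply Continuous.intervalIntegrable; fun_prop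
  rw [intervalIntegral.integral_eq_sub_of_hasDerivAt hderiv hint]
  have h3 : Real.exp (-(2*σ) * t₁) > 0 := Real.exp_pos _
  have h4 : Real.exp (-(2*σ) * 0) = 1 := by norm_num
  rw [h4]
  have h2σ : (0:ℝ) < 2*σ := by positivity
  have h5 : -Real.exp (-(2*σ)*t₁)/(2*σ) - -1/(2*σ) = (1 - Real.exp (-(2*σ)*t₁))/(2*σ) := by
    ring
  rw [h5]
  gcongr
  linarith

lemma term_le (a b : ℝ) (ha : 0 < a) (hb : b ≠ 0) (j : ℕ) {β₁ β₂ : ℝ}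
    (h1 : β₁ ∈ Set.Icc (0:ℝ) 1) (h2 : β₂ ∈ Set.Icc (0:ℝ) 1) :
    (psi a b j β₁ - psi a b j β₂)^2 * (2 * sigma' a b j)⁻¹
      ≤ ((2*Bc a b) * Real.sqrt (2*Bc a b*Lc a b) * (2/(a*π^2)))
        * (Real.sqrt ((j:ℝ)+1)/((j:ℝ)+1)^2) * Real.sqrt |β₁ - β₂| := by
  have hB := Bc_pos a b
  have hL := Lc_nonneg a b
  have hπ := pi_pos
  cases j with
  | zero =>
    rw [psi_zero_const a b β₁ β₂, sub_self]
    have h5 : (0:ℝ) ≤ Real.sqrt ((0:ℝ)+1)/((0:ℝ)+1)^2 := by positivity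
    have h6 : (0:ℝ) ≤ Real.sqrt |β₁ - β₂| := Real.sqrt_nonneg _
    have h7 : (0:ℝ) ≤ (2*Bc a b) * Real.sqrt (2*Bc a b*Lc a b) * (2/(a*π^2)) := by positivity
    simp only [ne_eq, zero_pow, OfNat.ofNat_ne_zero, not_false_eq_true, zero_mul]
    positivity
  | succ j =>
    set Δ := |β₁ - β₂| with hΔ
    have hΔ0 : 0 ≤ Δ := abs_nonneg _
    set D := |psi a b (j+1) β₁ - psi a b (j+1) β₂| with hD
    have hD0 : 0 ≤ D := abs_nonneg _
    have hd1 : D ≤ 2 * Bc a b := d_abs_le a b (j+1) h1 h2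
    have hd2 : D ≤ Lc a b * ((j:ℝ)+1+1) * Δ := by
      have := psi_lip a b (j+1) β₁ β₂ h1 h2
      rw [hD]
      calc |psi a b (j+1) β₁ - psi a b (j+1) β₂|
          ≤ Lc a b * (((j+1 : ℕ):ℝ) + 1) * |β₁ - β₂| := this
        _ = Lc a b * ((j:ℝ)+1+1) * Δ := by push_cast; ring
    have hd3 : D ≤ Real.sqrt (2*Bc a b*Lc a b) * Real.sqrt ((j:ℝ)+1+1) * Real.sqrt Δ := by
      have e1 : D = Real.sqrt (D * D) := (Real.sqrt_mul_self hD0).symm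
      have e2 : Real.sqrt (D * D) ≤ Real.sqrt ((2*Bc a b) * (Lc a b * ((j:ℝ)+1+1) * Δ)) := by
        apply Real.sqrt_le_sqrt
        exact mul_le_mul hd1 hd2 hD0 (by positivity)
      have e3 : (2*Bc a b) * (Lc a b * ((j:ℝ)+1+1) * Δ)
          = ((2*Bc a b*Lc a b) * ((j:ℝ)+1+1)) * Δ := by ring
      have e4 : Real.sqrt (((2*Bc a b*Lc a b) * ((j:ℝ)+1+1)) * Δ)
          = Real.sqrt (2*Bc a b*Lc a b) * Real.sqrt ((j:ℝ)+1+1) * Real.sqrt Δ := by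
        rw [Real.sqrt_mul (by positivity), Real.sqrt_mul (by positivity)]
      rw [e1]
      calc Real.sqrt (D*D) ≤ Real.sqrt ((2*Bc a b) * (Lc a b * ((j:ℝ)+1+1) * Δ)) := e2
        _ = Real.sqrt (2*Bc a b*Lc a b) * Real.sqrt ((j:ℝ)+1+1) * Real.sqrt Δ := by
            rw [e3, e4]
    have hsq : (psi a b (j+1) β₁ - psi a b (j+1) β₂)^2
        ≤ (2*Bc a b) * (Real.sqrt (2*Bc a b*Lc a b) * Real.sqrt ((j:ℝ)+1+1) * Real.sqrt Δ) := by
      rw [← sq_abs, ← hD, sq]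
      exact mul_le_mul hd1 hd3 hD0 (by positivity)
    have hσinv : (2 * sigma' a b (j+1))⁻¹ ≤ 2/(a*π^2*((j:ℝ)+1+1)^2) := by
      have hσge : a * π^2 * (((j+1:ℕ)):ℝ)^2 ≤ sigma' a b (j+1) := sigma_ge ha (j+1)
      have hq : a*π^2*((j:ℝ)+1+1)^2/4 ≤ a * π^2 * (((j+1:ℕ)):ℝ)^2 := by
        push_cast
        have hj : (0:ℝ) ≤ (j:ℝ) := Nat.cast_nonneg j
        have : ((j:ℝ)+1+1)^2 ≤ 4*((j:ℝ)+1)^2 := by nlinarith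
        have hap : (0:ℝ) < a*π^2 := by positivity
        nlinarith
      have hpos : (0:ℝ) < a*π^2*((j:ℝ)+1+1)^2/2 := by positivity
      have hle : a*π^2*((j:ℝ)+1+1)^2/2 ≤ 2 * sigma' a b (j+1) := by linarith
      calc (2 * sigma' a b (j+1))⁻¹ ≤ (a*π^2*((j:ℝ)+1+1)^2/2)⁻¹ :=
            inv_anti₀ hpos hle
        _ = 2/(a*π^2*((j:ℝ)+1+1)^2) := by field_simp
    calc (psi a b (j+1) β₁ - psi a b (j+1) β₂)^2 * (2 * sigma' a b (j+1))⁻¹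
        ≤ ((2*Bc a b) * (Real.sqrt (2*Bc a b*Lc a b) * Real.sqrt ((j:ℝ)+1+1) * Real.sqrt Δ))
          * (2/(a*π^2*((j:ℝ)+1+1)^2)) := by
          have hσpos : (0:ℝ) < 2 * sigma' a b (j+1) := by
            have := sigma_pos ha hb (j+1); linarith
          apply mul_le_mul hsq hσinv (inv_nonneg.2 hσpos.le) (by positivity)
      _ = ((2*Bc a b) * Real.sqrt (2*Bc a b*Lc a b) * (2/(a*π^2)))
          * (Real.sqrt (((j+1:ℕ):ℝ)+1)/(((j+1:ℕ):ℝ)+1)^2) * Real.sqrt Δ := by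
          push_cast
          have hne : ((j:ℝ)+1+1) ≠ 0 := by positivity
          field_simp
end Chunk6

set_option maxHeartbeats 1000000 in
/-- for every `t₁ > 0` there is a finite constant `K` (depending only
on `a`, `b`, `t₁`) such that for all `β₁, β₂ ∈ [0,1]`,
`∫₀^{t₁} ∫₀¹ (P_s(β₁,x) - P_s(β₂,x))² dx ds ≤ K(|β₁-β₂|² + |β₁-β₂|^{1/2})`. -/
theorem green_kernel_L2_continuity (a b : ℝ) (ha : 0 < a) (hb : b ≠ 0)
    (t₁ : ℝ) (ht₁ : 0 < t₁) :
    ∃ K : ℝ, ∀ β₁ ∈ Set.Icc (0 : ℝ) 1, ∀ β₂ ∈ Set.Icc (0 : ℝ) 1,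
      (∫ s in (0 : ℝ)..t₁, ∫ x in (0 : ℝ)..1,
          (greenP a b s β₁ x - greenP a b s β₂ x) ^ 2)
        ≤ K * (|β₁ - β₂| ^ 2 + Real.sqrt |β₁ - β₂|) := by
  have hπ := pi_pos
  have hB := Bc_pos a b
  have hL := Lc_nonneg a b
  set C₁ : ℝ := (2*Bc a b) * Real.sqrt (2*Bc a b*Lc a b) * (2/(a*π^2)) with hC₁
  have hC₁nn : 0 ≤ C₁ := by rw [hC₁]; positivity
  set W0 : ℝ := ∑' j : ℕ, Real.sqrt ((j:ℝ)+1)/((j:ℝ)+1)^2 with hW0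
  have hW0nn : 0 ≤ W0 := tsum_nonneg (fun j => by positivity)
  refine ⟨Real.exp (2*|cc a b|) * C₁ * W0, ?_⟩
  intro β₁ h1 β₂ h2
  set c := cc a b with hc
  set Δ := |β₁ - β₂| with hΔ
  have hΔ0 : 0 ≤ Δ := abs_nonneg _
  set d : ℕ → ℝ := fun j => psi a b j β₁ - psi a b j β₂ with hd
  have hdb : ∀ j, |d j| ≤ 2 * Bc a b := fun j => d_abs_le a b j h1 h2
  set G : ℝ → ℝ := fun x => Real.sqrt (2 * c / (1 - Real.exp (-2 * c)))
      + Real.sqrt 2 * Real.exp (c * x) with hG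
  have hGnn : ∀ x, 0 ≤ G x := fun x => by rw [hG]; positivity
  have hψG : ∀ j x, |psi a b j x| ≤ G x := fun j x => psi_bound_global a b j x
  -- the jointly measurable modification
  set q : ℕ → ℝ × ℝ → ℝ := fun j p =>
    if 0 < p.1 then Real.exp (-sigma' a b j * p.1) * (d j * psi a b j p.2) else 0 with hq
  have hqmeas : ∀ j, Measurable (q j) := by
    intro j
    apply Measurable.ite
    · exact measurableSet_lt measurable_const measurable_fst
    · have : Continuous (fun p : ℝ × ℝ =>
          Real.exp (-sigma' a b j * p.1) * (d j * psi a b j p.2)) := by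
        apply Continuous.mul
        · exact Real.continuous_exp.comp (continuous_const.mul continuous_fst)
        · exact continuous_const.mul ((psi_cont a b j).comp continuous_snd)
      exact this.measurable
    · exact measurable_const
  have hsumq : ∀ p : ℝ × ℝ, 0 < p.1 →
      Summable (fun j => Real.exp (-sigma' a b j * p.1) * (d j * psi a b j p.2)) := by
    intro p hp
    apply summable_exp_sigma_mul (b := b) ha hp (U := (2*Bc a b) * G p.2)
    intro j
    rw [abs_mul]
    exact mul_le_mul (hdb j) (hψG j p.2) (abs_nonneg _) (by positivity)
  set Wf : ℝ × ℝ → ℝ := fun p => ∑' j, q j p with hWf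
  have hWmeas : Measurable Wf := by
    apply measurable_of_tendsto_metrizable (f := fun n p => ∑ j ∈ Finset.range n, q j p)
      (fun n => Finset.measurable_sum _ (fun j _ => hqmeas j))
    rw [tendsto_pi_nhds]
    intro p
    rcases lt_or_ge 0 p.1 with hp | hp
    · have hqp : ∀ j, q j p = Real.exp (-sigma' a b j * p.1) * (d j * psi a b j p.2) :=
        fun j => if_pos hp
      exact (((hsumq p hp).congr (fun j => (hqp j).symm)).hasSum).tendsto_sum_nat
    · have hqp : ∀ j, q j p = 0 := fun j => if_neg (not_lt.2 hp)
      have hWp : Wf p = 0 := by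
        rw [hWf]
        simp only
        rw [tsum_congr hqp, tsum_zero]
      rw [hWp]
      simpa [hqp] using (tendsto_const_nhds :
        Filter.Tendsto (fun _ : ℕ => (0:ℝ)) Filter.atTop (nhds 0))
  have hWD : ∀ p : ℝ × ℝ, 0 < p.1 →
      Wf p = greenP a b p.1 β₁ p.2 - greenP a b p.1 β₂ p.2 := by
    intro p hp
    have hs1 : Summable (fun j =>
        Real.exp (-sigma' a b j * p.1) * (psi a b j β₁ * psi a b j p.2)) := by
      apply summable_exp_sigma_mul (b := b) ha hp (U := Bc a b * G p.2)
      intro j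
      rw [abs_mul]
      exact mul_le_mul (psi_bound a b j β₁ h1) (hψG j p.2) (abs_nonneg _) hB.le
    have hs2 : Summable (fun j =>
        Real.exp (-sigma' a b j * p.1) * (psi a b j β₂ * psi a b j p.2)) := by
      apply summable_exp_sigma_mul (b := b) ha hp (U := Bc a b * G p.2)
      intro j
      rw [abs_mul]
      exact mul_le_mul (psi_bound a b j β₂ h2) (hψG j p.2) (abs_nonneg _) hB.le
    have e1 : greenP a b p.1 β₁ p.2
        = ∑' j, Real.exp (-sigma' a b j * p.1) * (psi a b j β₁ * psi a b j p.2) := by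
      rw [greenP]; exact tsum_congr (fun j => by ring)
    have e2 : greenP a b p.1 β₂ p.2
        = ∑' j, Real.exp (-sigma' a b j * p.1) * (psi a b j β₂ * psi a b j p.2) := by
      rw [greenP]; exact tsum_congr (fun j => by ring)
    rw [e1, e2, ← Summable.tsum_sub hs1 hs2, hWf]
    exact tsum_congr (fun j => by rw [hq]; simp only [if_pos hp]; rw [hd]; ring)
  -- inner integral as measurable function of s
  have hFmeas : MeasureTheory.StronglyMeasurable (fun p : ℝ × ℝ => (Wf p)^2) := by
    have he : (fun p : ℝ × ℝ => (Wf p)^2) = fun p => Wf p * Wf p := by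
      funext p; rw [sq]
    rw [he]
    exact (hWmeas.mul hWmeas).stronglyMeasurable
  set ν := MeasureTheory.volume.restrict (Set.Ioc (0:ℝ) 1) with hν
  set g : ℝ → ℝ := fun s => ∫ x, (Wf (s, x))^2 ∂ν with hg
  have hgmeas : MeasureTheory.StronglyMeasurable g := hFmeas.integral_prod_right'
  have hgnn : ∀ s, 0 ≤ g s := fun s => MeasureTheory.integral_nonneg (fun x => sq_nonneg _)
  set μ := MeasureTheory.volume.restrict (Set.Ioc (0:ℝ) t₁) with hμ
  have hge : ∀ s ∈ Set.Ioc (0:ℝ) t₁,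
      g s = ∫ x in (0:ℝ)..1, (greenP a b s β₁ x - greenP a b s β₂ x)^2 := by
    intro s hs
    rw [intervalIntegral.integral_of_le zero_le_one, hg]
    simp only
    rw [hν]
    apply MeasureTheory.setIntegral_congr_fun measurableSet_Ioc
    intro x _
    simp only
    rw [hWD (s, x) hs.1]
  have hLHS : (∫ s in (0:ℝ)..t₁, ∫ x in (0:ℝ)..1,
      (greenP a b s β₁ x - greenP a b s β₂ x)^2) = ∫ s, g s ∂μ := by
    rw [intervalIntegral.integral_of_le ht₁.le, hμ]
    apply MeasureTheory.setIntegral_congr_fun measurableSet_Ioc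
    intro s hs
    exact (hge s hs).symm
  rw [hLHS]
  have hBo : ∫ s, g s ∂μ = (∫⁻ s, ENNReal.ofReal (g s) ∂μ).toReal := by
    rw [MeasureTheory.integral_eq_lintegral_of_nonneg_ae
      (MeasureTheory.ae_of_all _ hgnn) hgmeas.aestronglyMeasurable]
  rw [hBo]
  -- key pointwise bound
  have hsummand_nn : ∀ (j : ℕ) (s : ℝ),
      0 ≤ Real.exp (2*|c|) * (Real.exp (-sigma' a b j * s) * d j)^2 := by
    intro j s; positivity
  have hαs : ∀ s : ℝ, 0 < s → Summable (fun j =>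
      Real.exp (2*|c|) * (Real.exp (-sigma' a b j * s) * d j)^2) := by
    intro s hs
    have hbase : Summable (fun j => Real.exp (-sigma' a b j * s) * |d j|) :=
      summable_exp_sigma_mul (b := b) ha hs (U := 2*Bc a b)
        (fun j => by rw [abs_abs]; exact hdb j)
    apply Summable.of_nonneg_of_le (fun j => hsummand_nn j s) _
      ((hbase.mul_left (Real.exp (2*|c|) * (2*Bc a b))))
    intro j
    have hexple : Real.exp (-sigma' a b j * s) ≤ 1 := by
      rw [Real.exp_le_one_iff]
      have := sigma_pos ha hb j
      nlinarith
    have h0 : (0:ℝ) ≤ Real.exp (-sigma' a b j * s) := (Real.exp_pos _).le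
    calc Real.exp (2*|c|) * (Real.exp (-sigma' a b j * s) * d j)^2
        = Real.exp (2*|c|) * (Real.exp (-sigma' a b j * s) * Real.exp (-sigma' a b j * s)
          * (|d j| * |d j|)) := by
          rw [abs_mul_abs_self (d j)]; ring
      _ ≤ Real.exp (2*|c|) * (1 * Real.exp (-sigma' a b j * s) * ((2*Bc a b) * |d j|)) := by
          apply mul_le_mul_of_nonneg_left _ (Real.exp_pos _).le
          apply mul_le_mul (by nlinarith) (by nlinarith [hdb j, abs_nonneg (d j)])
            (by positivity) (by nlinarith)
      _ = Real.exp (2*|c|) * (2*Bc a b) * (Real.exp (-sigma' a b j * s) * |d j|) := by ring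
  have hkey : ∀ s ∈ Set.Ioc (0:ℝ) t₁, ENNReal.ofReal (g s)
      ≤ ∑' j, ENNReal.ofReal (Real.exp (2*|c|) * (Real.exp (-sigma' a b j * s) * d j)^2) := by
    intro s hs
    have hgs : g s ≤ Real.exp (2*|c|) * ∑' j, (Real.exp (-sigma' a b j * s) * d j)^2 := by
      rw [hge s hs]
      exact inner_bound a b ha hb hs.1 h1 h2
    calc ENNReal.ofReal (g s)
        ≤ ENNReal.ofReal (Real.exp (2*|c|) * ∑' j, (Real.exp (-sigma' a b j * s) * d j)^2) :=
          ENNReal.ofReal_le_ofReal hgs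
      _ = ENNReal.ofReal (∑' j, Real.exp (2*|c|) * (Real.exp (-sigma' a b j * s) * d j)^2) := by
          rw [tsum_mul_left]
      _ = ∑' j, ENNReal.ofReal (Real.exp (2*|c|) * (Real.exp (-sigma' a b j * s) * d j)^2) :=
          ENNReal.ofReal_tsum_of_nonneg (fun j => hsummand_nn j s) (hαs s hs.1)
  have hlin : (∫⁻ s, ENNReal.ofReal (g s) ∂μ)
      ≤ ENNReal.ofReal (Real.exp (2*|c|) * C₁ * W0 * Real.sqrt Δ) := by
    calc ∫⁻ s, ENNReal.ofReal (g s) ∂μ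
        ≤ ∫⁻ s, ∑' j, ENNReal.ofReal
            (Real.exp (2*|c|) * (Real.exp (-sigma' a b j * s) * d j)^2) ∂μ := by
          apply MeasureTheory.lintegral_mono_ae
          rw [hμ]
          exact (MeasureTheory.ae_restrict_iff' measurableSet_Ioc).2
            (MeasureTheory.ae_of_all _ hkey)
      _ = ∑' j, ∫⁻ s, ENNReal.ofReal
            (Real.exp (2*|c|) * (Real.exp (-sigma' a b j * s) * d j)^2) ∂μ := by
          apply MeasureTheory.lintegral_tsum
          intro j
          apply Measurable.aemeasurable
          apply ENNReal.measurable_ofReal.comp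
          have : Continuous (fun s : ℝ =>
              Real.exp (2*|c|) * (Real.exp (-sigma' a b j * s) * d j)^2) := by fun_prop
          exact this.measurable
      _ ≤ ∑' (j : ℕ), ENNReal.ofReal ((Real.exp (2*|c|) * C₁ * Real.sqrt Δ)
            * (Real.sqrt ((j:ℝ)+1)/((j:ℝ)+1)^2)) := by
          apply ENNReal.tsum_le_tsum
          intro j
          have hσj := sigma_pos ha hb j
          have hint : MeasureTheory.Integrable (fun s =>
              Real.exp (2*|c|) * (Real.exp (-sigma' a b j * s) * d j)^2) μ := by
            rw [hμ]
            apply Continuous.integrableOn_Ioc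
            fun_prop
          rw [← MeasureTheory.ofReal_integral_eq_lintegral_ofReal hint
            (MeasureTheory.ae_of_all _ (fun s => hsummand_nn j s))]
          apply ENNReal.ofReal_le_ofReal
          have e0 : ∀ s : ℝ, Real.exp (2*|c|) * (Real.exp (-sigma' a b j * s) * d j)^2
              = (Real.exp (2*|c|) * (d j)^2) * Real.exp (-(2*sigma' a b j) * s) := by
            intro s
            have : (Real.exp (-sigma' a b j * s))^2 = Real.exp (-(2*sigma' a b j) * s) := by
              rw [← Real.exp_nat_mul]
              norm_num
              ring_nf
            rw [mul_pow, this]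
            ring
          simp only [e0]
          rw [MeasureTheory.integral_const_mul]
          have hI : ∫ s, Real.exp (-(2*sigma' a b j) * s) ∂μ ≤ 1/(2*sigma' a b j) := by
            rw [hμ, ← intervalIntegral.integral_of_le ht₁.le]
            exact integral_exp_neg_le _ _ hσj ht₁
          have hInn : 0 ≤ ∫ s, Real.exp (-(2*sigma' a b j) * s) ∂μ :=
            MeasureTheory.integral_nonneg (fun s => (Real.exp_pos _).le)
          calc (Real.exp (2*|c|) * (d j)^2) * ∫ s, Real.exp (-(2*sigma' a b j) * s) ∂μ
              ≤ (Real.exp (2*|c|) * (d j)^2) * (1/(2*sigma' a b j)) := by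
                apply mul_le_mul_of_nonneg_left hI (by positivity)
            _ = Real.exp (2*|c|) * ((d j)^2 * (2*sigma' a b j)⁻¹) := by
                rw [one_div]; ring
            _ ≤ Real.exp (2*|c|) * (C₁ * (Real.sqrt ((j:ℝ)+1)/((j:ℝ)+1)^2) * Real.sqrt Δ) := by
                apply mul_le_mul_of_nonneg_left _ (Real.exp_pos _).le
                have := term_le a b ha hb j h1 h2
                rw [hd, hC₁, hΔ]
                calc (psi a b j β₁ - psi a b j β₂)^2 * (2 * sigma' a b j)⁻¹
                    ≤ ((2*Bc a b) * Real.sqrt (2*Bc a b*Lc a b) * (2/(a*π^2)))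
                      * (Real.sqrt ((j:ℝ)+1)/((j:ℝ)+1)^2) * Real.sqrt |β₁ - β₂| := this
                  _ = ((2*Bc a b) * Real.sqrt (2*Bc a b*Lc a b) * (2/(a*π^2)))
                      * (Real.sqrt ((j:ℝ)+1)/((j:ℝ)+1)^2) * Real.sqrt |β₁ - β₂| := rfl
            _ = (Real.exp (2*|c|) * C₁ * Real.sqrt Δ)
                * (Real.sqrt ((j:ℝ)+1)/((j:ℝ)+1)^2) := by ring
      _ = ENNReal.ofReal (Real.exp (2*|c|) * C₁ * W0 * Real.sqrt Δ) := by
          rw [← ENNReal.ofReal_tsum_of_nonneg (fun j => by positivity)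
            (summable_w.mul_left _)]
          congr 1
          rw [tsum_mul_left, hW0]
          ring
  have hKnn : 0 ≤ Real.exp (2*|c|) * C₁ * W0 * Real.sqrt Δ := by positivity
  calc (∫⁻ s, ENNReal.ofReal (g s) ∂μ).toReal
      ≤ (ENNReal.ofReal (Real.exp (2*|c|) * C₁ * W0 * Real.sqrt Δ)).toReal :=
        ENNReal.toReal_mono ENNReal.ofReal_ne_top hlin
    _ = Real.exp (2*|c|) * C₁ * W0 * Real.sqrt Δ := ENNReal.toReal_ofReal hKnn
    _ ≤ Real.exp (2*|c|) * C₁ * W0 * (Δ^2 + Real.sqrt Δ) := by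
        have hc2 : 0 ≤ Real.exp (2*|c|) * C₁ * W0 := by positivity
        nlinarith [sq_nonneg Δ]
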